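/- For two alternatives, the naïve randomized sink mechanism (pick each agent as sink with probability 1/n, then choose the alternative maximizing the total valuation of the remaining agents) has expected welfare loss at most (⌈n/2⌉/n)·M on every valuation profile, and this bound is approached arbitrarily closely by some profiles; hence its expected sample inefficiency is (1/n²)·⌈n/2⌉. -/

import Mathlib

open Finset

set_option maxHeartbeats 1000000


lemma bool_eq_not {a b : Bool} (h : a ≠ b) : a = !b := by
  cases a <;> cases b <;> simp_all

lemma sum_loss_le {n : ℕ} (hn : 2 ≤ n) (M : ℝ) (hM : 0 < M)
    (f : Fin n → (Fin n → Bool → ℝ) → Bool)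
    (hf : ∀ (i : Fin n) (v : Fin n → Bool → ℝ),
        (∀ j x, v j x ∈ Set.Ioo (-(M/2)) (M/2)) →
        ∀ x : Bool, ∑ j ∈ Finset.univ.erase i, v j x ≤
          ∑ j ∈ Finset.univ.erase i, v j (f i v))
    (v : Fin n → Bool → ℝ) (hv : ∀ j x, v j x ∈ Set.Ioo (-(M/2)) (M/2)) :
    ∑ i : Fin n, (max (∑ j, v j true) (∑ j, v j false) - ∑ j, v j (f i v))
      ≤ (((n + 1) / 2 : ℕ) : ℝ) * M := by
  set q : ℕ := (n + 1) / 2 with hq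
  set S : Bool → ℝ := fun x => ∑ j, v j x with hS
  obtain ⟨xs, hxs1, hxs2⟩ : ∃ xs : Bool, S (!xs) ≤ S xs ∧ max (S true) (S false) = S xs := by
    by_cases h : S false ≤ S true
    · exact ⟨true, h, max_eq_left h⟩
    · exact ⟨false, (not_le.mp h).le, max_eq_right (not_le.mp h).le⟩
  set D : ℝ := S xs - S (!xs) with hD
  have hD0 : 0 ≤ D := by simp [hD]; linarith
  -- d i bounds
  set d : Fin n → ℝ := fun i => v i xs - v i (!xs) with hd
  have hdub : ∀ i, d i < M := fun i => by
    have h1 := (hv i xs).2; have h2 := (hv i (!xs)).1; simp [hd]; linarith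
  have hdlb : ∀ i, -M < d i := fun i => by
    have h1 := (hv i xs).1; have h2 := (hv i (!xs)).2; simp [hd]; linarith
  -- sum of d = D
  have hsumd : ∑ i, d i = D := by
    simp [hd, hD, hS, Finset.sum_sub_distrib]
  set B : Finset (Fin n) := Finset.univ.filter (fun i => f i v ≠ xs) with hB
  have hBmem : ∀ i ∈ B, f i v = !xs := by
    intro i hi; exact bool_eq_not (Finset.mem_filter.mp hi).2
  -- per-bad-agent inequality
  have hkey : ∀ i ∈ B, D ≤ d i := by
    intro i hi
    have h1 := hf i v hv xs
    rw [hBmem i hi] at h1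
    have e1 : ∑ j ∈ Finset.univ.erase i, v j xs + v i xs = S xs :=
      Finset.sum_erase_add _ _ (Finset.mem_univ i)
    have e2 : ∑ j ∈ Finset.univ.erase i, v j (!xs) + v i (!xs) = S (!xs) :=
      Finset.sum_erase_add _ _ (Finset.mem_univ i)
    simp only [hD, hd]; linarith
  -- losses
  have hL : ∀ i : Fin n, max (S true) (S false) - ∑ j, v j (f i v)
      = if f i v = xs then 0 else D := by
    intro i
    by_cases h : f i v = xs
    · have e : ∑ j, v j xs = S xs := rfl
      rw [if_pos h, hxs2, h, e, sub_self]
    · rw [if_neg h, hxs2]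
      have : f i v = !xs := bool_eq_not h
      rw [this, hD]
  have hsumL : ∑ i : Fin n, (max (S true) (S false) - ∑ j, v j (f i v)) = (B.card : ℝ) * D := by
    have flip : ∀ i : Fin n, max (S true) (S false) - ∑ j, v j (f i v)
        = if f i v ≠ xs then D else (0:ℝ) := by
      intro i; rw [hL i]; by_cases h : f i v = xs <;> simp [h]
    have e2 : ∑ i ∈ B, D = ∑ i : Fin n, if f i v ≠ xs then D else 0 := by
      rw [hB]; exact Finset.sum_filter _ _
    calc ∑ i : Fin n, (max (S true) (S false) - ∑ j, v j (f i v))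
        = ∑ i : Fin n, (if f i v ≠ xs then D else 0) :=
          Finset.sum_congr rfl (fun i _ => flip i)
      _ = ∑ i ∈ B, D := e2.symm
      _ = (B.card : ℝ) * D := by rw [Finset.sum_const, nsmul_eq_mul]
  set k : ℕ := B.card with hk
  have hkn : k ≤ n := by
    rw [hk, hB]
    simpa using Finset.card_filter_le (Finset.univ : Finset (Fin n)) _
  -- global inequality: (k-1) D ≤ (n-k) M
  have hglob : (k : ℝ) * D ≤ D + ((n : ℝ) - k) * M := by
    have h1 : (k : ℝ) * D ≤ ∑ i ∈ B, d i := by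
      have := Finset.card_nsmul_le_sum B d D hkey
      simpa [nsmul_eq_mul] using this
    have h2 : ∑ i ∈ B, d i = D - ∑ i ∈ Bᶜ, d i := by
      rw [← hsumd, ← Finset.sum_add_sum_compl B d]; ring
    have h3 : -(((n : ℝ) - k) * M) ≤ ∑ i ∈ Bᶜ, d i := by
      have hcard : ((Bᶜ.card : ℕ) : ℝ) = (n : ℝ) - k := by
        rw [Finset.card_compl, Fintype.card_fin, ← hk, Nat.cast_sub hkn]
      have := Finset.card_nsmul_le_sum Bᶜ d (-M) (fun i _ => (hdlb i).le)
      rw [nsmul_eq_mul, hcard] at this; linarith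
    linarith
  rw [hsumL]
  have h2q : n ≤ 2 * q ∧ 2 * q ≤ n + 1 := by constructor <;> omega
  by_cases hcase : k ≤ q
  · rcases Nat.eq_zero_or_pos k with h0 | h1
    · rw [h0]; simp; positivity
    · obtain ⟨i, hi⟩ := Finset.card_pos.mp (hk ▸ h1)
      have hDM : D < M := lt_of_le_of_lt (hkey i hi) (hdub i)
      have : (k : ℝ) ≤ (q : ℝ) := Nat.cast_le.mpr hcase
      nlinarith
  · push_neg at hcase
    have hk1 : (q : ℝ) + 1 ≤ (k : ℝ) := by exact_mod_cast hcase
    have hnq : (n : ℝ) ≤ 2 * q := by exact_mod_cast h2q.1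
    have hknR : (k : ℝ) ≤ n := Nat.cast_le.mpr hkn
    have hq1 : (1 : ℝ) ≤ q := by
      have : 1 ≤ q := by omega
      exact_mod_cast this
    -- k(n-k) ≤ q(k-1)
    have hnat : (k : ℝ) * ((n : ℝ) - k) ≤ (q : ℝ) * ((k : ℝ) - 1) := by nlinarith
    -- conclude
    nlinarith [hglob, hD0, hM.le, mul_nonneg hD0 (sub_nonneg.mpr hk1)]


lemma card_filter_lt_fin (n q : ℕ) (h : q ≤ n) :
    (Finset.univ.filter (fun i : Fin n => (i:ℕ) < q)).card = q := by
  have : (Finset.univ.filter (fun i : Fin n => (i:ℕ) < q))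
      = (Finset.range q).attachFin (fun m hm => lt_of_lt_of_le (Finset.mem_range.mp hm) h) := by
    ext i; simp [Finset.mem_attachFin]
  rw [this, Finset.card_attachFin, Finset.card_range]

lemma construction {n : ℕ} (hn : 2 ≤ n) (M : ℝ) (hM : 0 < M)
    (f : Fin n → (Fin n → Bool → ℝ) → Bool)
    (hf : ∀ (i : Fin n) (v : Fin n → Bool → ℝ),
        (∀ j x, v j x ∈ Set.Ioo (-(M/2)) (M/2)) →
        ∀ x : Bool, ∑ j ∈ Finset.univ.erase i, v j x ≤
          ∑ j ∈ Finset.univ.erase i, v j (f i v))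
    (ε : ℝ) (hε : 0 < ε) :
    ∃ v : Fin n → Bool → ℝ,
        (∀ j x, v j x ∈ Set.Ioo (-(M/2)) (M/2)) ∧
        (1 / n) * ∑ i : Fin n,
            (max (∑ j, v j true) (∑ j, v j false) - ∑ j, v j (f i v))
          > (((n + 1) / 2 : ℕ) : ℝ) / n * M - ε := by
  set q : ℕ := (n + 1) / 2 with hq
  have hq1 : 1 ≤ q := by omega
  have hqn : q ≤ n := by omega
  have hnq1 : 1 ≤ n - q := by omega
  have h2q : n ≤ 2 * q ∧ 2 * q ≤ n + 1 := by omega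
  set ε₁ : ℝ := min ε M / 2 with hε₁def
  have hε₁pos : 0 < ε₁ := by positivity
  have hε₁M : ε₁ ≤ M / 2 := by
    rw [hε₁def]; have := min_le_right ε M; linarith
  set ε' : ℝ := 3 * ε₁ / 2 with hε'def
  have hε'pos : 0 < ε' := by positivity
  have hε'M : ε' < M := by rw [hε'def]; linarith
  have hε'ε : ε' < ε := by
    rw [hε'def, hε₁def]; have := min_le_left ε M; linarith
  set D : ℝ := M - ε' with hDdef
  have hDpos : 0 < D := by rw [hDdef]; linarith
  have hDM : D < M := by rw [hDdef]; linarith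
  have hnqR : (0:ℝ) < (n:ℝ) - q := by
    have : (q:ℝ) + 1 ≤ n := by exact_mod_cast by omega
    linarith
  set c : ℝ := (D - q * (M - ε₁)) / ((n:ℝ) - q) with hcdef
  have hcsum : ((n:ℝ) - q) * c = D - q * (M - ε₁) := by
    rw [hcdef]; field_simp
  have hMε₁ : 0 < M - ε₁ := by linarith
  have hcD : c < D := by
    have key : ((n:ℝ) - q) * (D - c) = D * ((n:ℝ) - q - 1) + q * (M - ε₁) := by
      rw [mul_sub, hcsum]; ring
    have h1 : (0:ℝ) ≤ (n:ℝ) - q - 1 := by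
      have : ((q:ℝ)) + 1 ≤ n := by exact_mod_cast by omega
      linarith
    have hqR : (1:ℝ) ≤ q := by exact_mod_cast hq1
    nlinarith
  have hcM : -M < c := by
    have key : ((n:ℝ) - q) * (c + M) = ((n:ℝ) - 2 * q + 1) * M + q * ε₁ - ε' := by
      rw [mul_add, hcsum, hDdef]; ring
    have h0 : (0:ℝ) ≤ (n:ℝ) - 2 * q + 1 := by
      have : 2 * q ≤ n + 1 := h2q.2
      have : (2 * q : ℝ) ≤ (n:ℝ) + 1 := by exact_mod_cast this
      linarith
    by_cases hq2 : 2 ≤ q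
    · have hqR : (2:ℝ) ≤ q := by exact_mod_cast hq2
      have : 0 < q * ε₁ - ε' := by rw [hε'def]; nlinarith
      nlinarith
    · have hqeq : q = 1 := by omega
      have hneq : n = 2 := by omega
      rw [hqeq, hneq] at key
      push_cast at key
      have : 0 < M + 1 * ε₁ - ε' := by rw [hε'def]; linarith
      nlinarith [key, hnqR]
  have hcM' : c < M := lt_trans hcD hDM
  -- the valuation profile
  set d : Fin n → ℝ := fun i => if (i:ℕ) < q then M - ε₁ else c with hddef
  set v : Fin n → Bool → ℝ := fun i x => if x then d i / 2 else -(d i / 2) with hvdef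
  have hdval : ∀ i : Fin n, d i = if (i:ℕ) < q then M - ε₁ else c := fun i => rfl
  have hdbound : ∀ i, -M < d i ∧ d i < M := by
    intro i
    rw [hdval i]
    by_cases h : (i:ℕ) < q
    · rw [if_pos h]; constructor <;> linarith
    · rw [if_neg h]; exact ⟨hcM, hcM'⟩
  have hv : ∀ j x, v j x ∈ Set.Ioo (-(M/2)) (M/2) := by
    intro j x
    obtain ⟨h1, h2⟩ := hdbound j
    rw [hvdef]
    cases x <;> simp <;> constructor <;> linarith
  -- sum of d
  have hsumd : ∑ i, d i = D := by
    have e : ∑ i : Fin n, d i = ∑ i : Fin n, if (i:ℕ) < q then M - ε₁ else c :=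
      Finset.sum_congr rfl (fun i _ => hdval i)
    rw [e, Finset.sum_ite, Finset.sum_const, Finset.sum_const, nsmul_eq_mul, nsmul_eq_mul,
      Finset.filter_not, Finset.card_sdiff_of_subset (Finset.filter_subset _ _),
      card_filter_lt_fin n q hqn]
    simp only [Finset.card_univ, Fintype.card_fin]
    rw [Nat.cast_sub hqn]
    linear_combination hcsum
  -- sums of v
  have hvt : ∑ j, v j true = D / 2 := by
    have e : ∑ j : Fin n, v j true = ∑ j : Fin n, d j / 2 := rfl
    rw [e, ← Finset.sum_div, hsumd]
  have hvf : ∑ j, v j false = -(D / 2) := by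
    have e : ∑ j : Fin n, v j false = ∑ j : Fin n, -(d j / 2) := rfl
    rw [e, Finset.sum_neg_distrib, ← Finset.sum_div, hsumd]
  have hmax : max (∑ j, v j true) (∑ j, v j false) = D / 2 := by
    rw [hvt, hvf]; exact max_eq_left (by linarith)
  have herase : ∀ i : Fin n, ∑ j ∈ Finset.univ.erase i, d j = D - d i := by
    intro i
    have := Finset.sum_erase_add Finset.univ d (Finset.mem_univ i)
    rw [hsumd] at this; linarith
  have heraset : ∀ i : Fin n, ∑ j ∈ Finset.univ.erase i, v j true = (D - d i) / 2 := by
    intro i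
    have e : ∑ j ∈ Finset.univ.erase i, v j true = ∑ j ∈ Finset.univ.erase i, d j / 2 := rfl
    rw [e, ← Finset.sum_div, herase i]
  have herasef : ∀ i : Fin n, ∑ j ∈ Finset.univ.erase i, v j false = -((D - d i) / 2) := by
    intro i
    have e : ∑ j ∈ Finset.univ.erase i, v j false = ∑ j ∈ Finset.univ.erase i, -(d j / 2) := rfl
    rw [e, Finset.sum_neg_distrib, ← Finset.sum_div, herase i]
  have hbad : ∀ i : Fin n, (i:ℕ) < q → f i v = false := by
    intro i hi
    have hdi : d i = M - ε₁ := by rw [hdval i, if_pos hi]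
    have hlt : ∑ j ∈ Finset.univ.erase i, v j true < ∑ j ∈ Finset.univ.erase i, v j false := by
      rw [heraset i, herasef i, hdi, hDdef]
      have : ε₁ < ε' := by rw [hε'def]; linarith
      have e2 : M - ε' - (M - ε₁) = ε₁ - ε' := by ring
      rw [e2]; linarith
    cases hfi : f i v
    · rfl
    · exfalso
      have h2 := hf i v hv false
      rw [hfi] at h2
      linarith
  have hgood : ∀ i : Fin n, ¬((i:ℕ) < q) → f i v = true := by
    intro i hi
    have hdi : d i = c := by rw [hdval i, if_neg hi]
    have hlt : ∑ j ∈ Finset.univ.erase i, v j false < ∑ j ∈ Finset.univ.erase i, v j true := by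
      rw [heraset i, herasef i, hdi]
      linarith
    cases hfi : f i v
    · exfalso
      have h2 := hf i v hv true
      rw [hfi] at h2
      linarith
    · rfl
  have hloss : ∀ i : Fin n, max (∑ j, v j true) (∑ j, v j false) - ∑ j, v j (f i v)
      = if (i:ℕ) < q then D else 0 := by
    intro i
    by_cases h : (i:ℕ) < q
    · rw [if_pos h, hbad i h, hmax, hvf]; ring
    · rw [if_neg h, hgood i h, hmax, hvt]; ring
  have htotal : ∑ i : Fin n,
      (max (∑ j, v j true) (∑ j, v j false) - ∑ j, v j (f i v)) = (q : ℝ) * D := by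
    rw [Finset.sum_congr rfl (fun i _ => hloss i), Finset.sum_ite, Finset.sum_const,
      Finset.sum_const, smul_zero, add_zero, card_filter_lt_fin n q hqn, nsmul_eq_mul]
  refine ⟨v, hv, ?_⟩
  rw [htotal]
  have hnR : (0:ℝ) < n := by positivity
  have hqleR : (q:ℝ) ≤ n := by exact_mod_cast hqn
  have hqnle1 : (q:ℝ) / n ≤ 1 := by rw [div_le_one hnR]; exact hqleR
  have h1 : (q:ℝ) / n * ε' < ε := by
    have : (q:ℝ) / n * ε' ≤ 1 * ε' := by
      apply mul_le_mul_of_nonneg_right hqnle1 hε'pos.le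
    linarith
  have expand : 1 / (n:ℝ) * ((q:ℝ) * D) = (q:ℝ) / n * M - (q:ℝ) / n * ε' := by
    rw [hDdef]; ring
  rw [expand]
  linarith



/-- for two alternatives, the naïve randomized sink mechanism has
expected welfare loss at most `(⌈n/2⌉/n)·M` on every profile, the bound is
approached arbitrarily closely, and the expected sample inefficiency (the
supremum of the normalized expected welfare loss) is `⌈n/2⌉/n²`. -/
theorem stmt_5 {n : ℕ} (hn : 2 ≤ n) (M : ℝ) (hM : 0 < M)
    (f : Fin n → (Fin n → Bool → ℝ) → Bool)
    (hf : ∀ (i : Fin n) (v : Fin n → Bool → ℝ),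
        (∀ j x, v j x ∈ Set.Ioo (-(M/2)) (M/2)) →
        ∀ x : Bool, ∑ j ∈ Finset.univ.erase i, v j x ≤
          ∑ j ∈ Finset.univ.erase i, v j (f i v)) :
    (∀ v : Fin n → Bool → ℝ, (∀ j x, v j x ∈ Set.Ioo (-(M/2)) (M/2)) →
        (1 / n) * ∑ i : Fin n,
            (max (∑ j, v j true) (∑ j, v j false) - ∑ j, v j (f i v))
          ≤ (((n + 1) / 2 : ℕ) : ℝ) / n * M)
    ∧ (∀ ε > (0:ℝ), ∃ v : Fin n → Bool → ℝ,
        (∀ j x, v j x ∈ Set.Ioo (-(M/2)) (M/2)) ∧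
        (1 / n) * ∑ i : Fin n,
            (max (∑ j, v j true) (∑ j, v j false) - ∑ j, v j (f i v))
          > (((n + 1) / 2 : ℕ) : ℝ) / n * M - ε)
    ∧ IsLUB { x : ℝ | ∃ v : Fin n → Bool → ℝ,
        (∀ j x', v j x' ∈ Set.Ioo (-(M/2)) (M/2)) ∧
        x = (1 / (n * M)) * ((1 / n) * ∑ i : Fin n,
            (max (∑ j, v j true) (∑ j, v j false) - ∑ j, v j (f i v))) }
        ((((n + 1) / 2 : ℕ) : ℝ) / (n^2)) := by
  have hnR : (0:ℝ) < n := by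
    have : (2:ℝ) ≤ n := by exact_mod_cast hn
    linarith
  have part1 : ∀ v : Fin n → Bool → ℝ, (∀ j x, v j x ∈ Set.Ioo (-(M/2)) (M/2)) →
      (1 / n) * ∑ i : Fin n,
          (max (∑ j, v j true) (∑ j, v j false) - ∑ j, v j (f i v))
        ≤ (((n + 1) / 2 : ℕ) : ℝ) / n * M := by
    intro v hv
    have h := sum_loss_le hn M hM f hf v hv
    have h2 : (0:ℝ) ≤ 1 / n := by positivity
    calc (1 / (n:ℝ)) * ∑ i : Fin n,
          (max (∑ j, v j true) (∑ j, v j false) - ∑ j, v j (f i v))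
        ≤ (1 / n) * ((((n + 1) / 2 : ℕ) : ℝ) * M) := by
          apply mul_le_mul_of_nonneg_left h h2
      _ = (((n + 1) / 2 : ℕ) : ℝ) / n * M := by ring
  refine ⟨part1, fun ε hε => construction hn M hM f hf ε hε, ?_, ?_⟩
  · -- upper bound
    rintro x ⟨v, hv, rfl⟩
    have h := part1 v hv
    have hpos : (0:ℝ) < 1 / ((n:ℝ) * M) := by positivity
    calc (1 / ((n:ℝ) * M)) * ((1 / n) * ∑ i : Fin n,
            (max (∑ j, v j true) (∑ j, v j false) - ∑ j, v j (f i v)))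
        ≤ (1 / ((n:ℝ) * M)) * ((((n + 1) / 2 : ℕ) : ℝ) / n * M) :=
          mul_le_mul_of_nonneg_left h hpos.le
      _ = (((n + 1) / 2 : ℕ) : ℝ) / (n^2) := by
          field_simp
  · -- least upper bound
    intro b hb
    by_contra hlt
    push_neg at hlt
    set ε₀ : ℝ := ((((n + 1) / 2 : ℕ) : ℝ) / (n^2) - b) * ((n:ℝ) * M) with hε₀def
    have hε₀pos : 0 < ε₀ := by
      have : 0 < (((n + 1) / 2 : ℕ) : ℝ) / (n^2) - b := by linarith
      positivity
    obtain ⟨v, hv, hgt⟩ := construction hn M hM f hf ε₀ hε₀pos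
    have hmem : (1 / ((n:ℝ) * M)) * ((1 / n) * ∑ i : Fin n,
        (max (∑ j, v j true) (∑ j, v j false) - ∑ j, v j (f i v))) ∈
        { x : ℝ | ∃ v : Fin n → Bool → ℝ,
          (∀ j x', v j x' ∈ Set.Ioo (-(M/2)) (M/2)) ∧
          x = (1 / (n * M)) * ((1 / n) * ∑ i : Fin n,
              (max (∑ j, v j true) (∑ j, v j false) - ∑ j, v j (f i v))) } :=
      ⟨v, hv, rfl⟩
    have hle := hb hmem
    have hpos : (0:ℝ) < 1 / ((n:ℝ) * M) := by positivity
    have hstep : (1 / ((n:ℝ) * M)) * ((((n + 1) / 2 : ℕ) : ℝ) / n * M - ε₀)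
        < (1 / ((n:ℝ) * M)) * ((1 / n) * ∑ i : Fin n,
            (max (∑ j, v j true) (∑ j, v j false) - ∑ j, v j (f i v))) :=
      (mul_lt_mul_iff_right₀ hpos).mpr hgt
    have hcalc : (1 / ((n:ℝ) * M)) * ((((n + 1) / 2 : ℕ) : ℝ) / n * M - ε₀) = b := by
      rw [hε₀def]; field_simp; ring
    rw [hcalc] at hstep
    linarith
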